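/- Let n ≥ 2 and let i be an integer with 1 ≤ i ≤ n/2. There exists a constant c = c(n) > 0 such that for all real B ≥ 2, the number of tuples t = (t₁,…,tₙ) ∈ ℤⁿ with max_j |t_j| ≤ B for which the polynomial f_t(x) = xⁿ + t₁x^{n−1} + ⋯ + tₙ has a factor of degree i in ℚ[x] (i.e., there exists g ∈ ℚ[x] of degree exactly i dividing f_t) is at most c · B^{n−i} if 2i < n, and at most c · B^{n−i} · log B if 2i = n. -/

import Mathlib

open Polynomial Finset Complex

noncomputable def n2 (p : ℂ[X]) (N : ℕ) : ℝ := ∑ k ∈ Finset.range N, Complex.normSq (p.coeff k)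

lemma normSq_swap (a s t : ℂ) :
    normSq (s - a * t) - normSq ((starRingEnd ℂ a) * s - t)
      = (1 - normSq a) * (normSq s - normSq t) := by
  simp only [Complex.normSq_sub, Complex.normSq_mul, Complex.normSq_conj, map_mul]
  have : (s * ((starRingEnd ℂ) a * (starRingEnd ℂ) t)).re
      = ((starRingEnd ℂ) a * s * (starRingEnd ℂ) t).re := by ring_nf
  rw [this]; ring

lemma coeff_linear_mul (α : ℂ) (q : ℂ[X]) (k : ℕ) :
    ((X - C α) * q).coeff k = (if k = 0 then 0 else q.coeff (k-1)) - α * q.coeff k := by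
  rw [sub_mul, coeff_sub, C_mul']
  cases k with
  | zero => simp [Polynomial.mul_coeff_zero]
  | succ m => simp [Polynomial.coeff_X_mul, Polynomial.coeff_smul, smul_eq_mul]

lemma coeff_linear_mul' (α : ℂ) (q : ℂ[X]) (k : ℕ) :
    ((C α * X - 1) * q).coeff k = α * (if k = 0 then 0 else q.coeff (k-1)) - q.coeff k := by
  rw [sub_mul, coeff_sub, one_mul, mul_assoc, C_mul']
  cases k with
  | zero => simp [Polynomial.mul_coeff_zero]
  | succ m => simp [Polynomial.coeff_X_mul, Polynomial.coeff_smul, smul_eq_mul]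

lemma n2_swap (α : ℂ) (q : ℂ[X]) (N : ℕ) (hq : q.coeff (N - 1) = 0) :
    n2 ((X - C α) * q) N = n2 ((C (starRingEnd ℂ α) * X - 1) * q) N := by
  cases N with
  | zero => simp [n2]
  | succ M =>
    set s : ℕ → ℂ := fun k => if k = 0 then 0 else q.coeff (k-1) with hs
    have hsum : ∑ k ∈ range (M+1), normSq (s k) = ∑ k ∈ range (M+1), normSq (q.coeff k) := by
      rw [Finset.sum_range_succ' (fun k => normSq (s k)) M, Finset.sum_range_succ]
      simp only [hs]
      simpa using hq
    have : n2 ((X - C α) * q) (M+1) - n2 ((C (starRingEnd ℂ α) * X - 1) * q) (M+1)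
        = (1 - normSq α) * (∑ k ∈ range (M+1), normSq (s k)
            - ∑ k ∈ range (M+1), normSq (q.coeff k)) := by
      unfold n2
      rw [← Finset.sum_sub_distrib, ← Finset.sum_sub_distrib, Finset.mul_sum]
      refine Finset.sum_congr rfl fun k _ => ?_
      rw [coeff_linear_mul, coeff_linear_mul']
      exact normSq_swap α (s k) (q.coeff k)
    rw [hsum, sub_self, mul_zero] at this
    linarith [this]

noncomputable def Complex.abs : AbsoluteValue ℂ ℝ :=
  IsAbsoluteValue.toAbsoluteValue (norm : ℂ → ℝ)

lemma Complex.abs_apply' (z : ℂ) : Complex.abs z = ‖z‖ := rfl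

lemma Complex.norm_eq_abs (z : ℂ) : ‖z‖ = Complex.abs z := rfl

lemma Complex.abs_conj (z : ℂ) : Complex.abs (starRingEnd ℂ z) = Complex.abs z := by
  simp [Complex.abs_apply']

lemma Complex.abs_intCast (n : ℤ) : Complex.abs (n : ℂ) = |(n : ℝ)| := by
  simp [Complex.abs_apply']

lemma Complex.sq_abs (z : ℂ) : Complex.abs z ^ 2 = Complex.normSq z := by
  rw [Complex.abs_apply', Complex.sq_norm]

noncomputable def swFac (a : ℂ) : ℂ[X] :=
  if 1 < Complex.abs a then C (starRingEnd ℂ a) * X - 1 else X - C a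

lemma swFac_eq (a : ℂ) : swFac a = if 1 < Complex.abs a
    then C (starRingEnd ℂ a) * X + C (-1) else X - C a := by
  unfold swFac; split <;> simp [sub_eq_add_neg]

lemma conj_ne_zero_of_big {a : ℂ} (h : 1 < Complex.abs a) : (starRingEnd ℂ a) ≠ 0 := by
  intro h0
  rw [← Complex.abs_conj, h0] at h
  simp at h
  linarith

lemma swFac_pos {a : ℂ} (h : 1 < Complex.abs a) : swFac a = C (starRingEnd ℂ a) * X - 1 :=
  if_pos h

lemma swFac_neg {a : ℂ} (h : ¬ 1 < Complex.abs a) : swFac a = X - C a :=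
  if_neg h

lemma swFac_natDegree (a : ℂ) : (swFac a).natDegree = 1 := by
  rw [swFac_eq]; split
  · exact Polynomial.natDegree_linear (conj_ne_zero_of_big (by assumption))
  · exact natDegree_X_sub_C a

lemma swFac_ne_zero (a : ℂ) : swFac a ≠ 0 := fun h => by
  have := swFac_natDegree a; rw [h] at this; simp at this

lemma swFac_abs_leadingCoeff (a : ℂ) :
    Complex.abs (swFac a).leadingCoeff = max 1 (Complex.abs a) := by
  rw [swFac_eq]; split
  · rename_i h
    rw [Polynomial.leadingCoeff_linear (conj_ne_zero_of_big h)]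
    rw [Complex.abs_conj]
    exact (max_eq_right h.le).symm
  · rename_i h
    rw [(monic_X_sub_C a).leadingCoeff]
    simp only [map_one]
    exact (max_eq_left (not_lt.mp h)).symm

lemma n2_swap_all (s : Multiset ℂ) : ∀ (q : ℂ[X]) (N : ℕ), q ≠ 0 →
    q.natDegree + Multiset.card s + 1 ≤ N →
    n2 (q * (s.map fun a => X - C a).prod) N = n2 (q * (s.map swFac).prod) N := by
  induction s using Multiset.induction_on with
  | empty => simp
  | cons a t IH =>
    intro q N hq hN
    rw [Multiset.map_cons, Multiset.prod_cons, Multiset.map_cons, Multiset.prod_cons]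
    have hq' : q * (X - C a) ≠ 0 := mul_ne_zero hq (X_sub_C_ne_zero a)
    have hdeg : (q * (X - C a)).natDegree = q.natDegree + 1 := by
      rw [Polynomial.natDegree_mul hq (X_sub_C_ne_zero a), natDegree_X_sub_C]
    have step1 : n2 (q * ((X - C a) * (t.map fun a => X - C a).prod)) N
        = n2 (q * ((X - C a) * (t.map swFac).prod)) N := by
      rw [show q * ((X - C a) * (t.map fun a => X - C a).prod)
          = (q * (X - C a)) * (t.map fun a => X - C a).prod by ring,
        show q * ((X - C a) * (t.map swFac).prod)
          = (q * (X - C a)) * (t.map swFac).prod by ring]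
      apply IH _ _ hq'
      rw [hdeg]
      have hc : Multiset.card (a ::ₘ t) = Multiset.card t + 1 := by simp
      omega
    rw [step1]
    -- now swap the head factor if needed
    have hT : ((t.map swFac).prod).natDegree ≤ Multiset.card t := by
      refine le_trans (Polynomial.natDegree_multiset_prod_le _) ?_
      rw [Multiset.map_map]
      simp only [Function.comp_def, swFac_natDegree]
      simp [Multiset.map_const', Multiset.sum_replicate]
    have hcoeff : (q * (t.map swFac).prod).coeff (N - 1) = 0 := by
      apply Polynomial.coeff_eq_zero_of_natDegree_lt
      have h1 : (q * (t.map swFac).prod).natDegree ≤ q.natDegree + Multiset.card t :=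
        le_trans (Polynomial.natDegree_mul_le) (Nat.add_le_add_left hT _)
      have hc : Multiset.card (a ::ₘ t) = Multiset.card t + 1 := by simp
      omega
    rw [show q * ((X - C a) * (t.map swFac).prod)
        = (X - C a) * (q * (t.map swFac).prod) by ring]
    by_cases hbig : 1 < Complex.abs a
    · rw [swFac_pos hbig, n2_swap a _ N hcoeff]
      congr 1; ring
    · rw [swFac_neg hbig]
      congr 1; ring

/-- Mahler measure of a monic complex polynomial. -/
noncomputable def Mah (p : ℂ[X]) : ℝ := (p.roots.map (fun a => max 1 (Complex.abs a))).prod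

lemma one_le_Mah (p : ℂ[X]) : 1 ≤ Mah p := by
  apply Multiset.one_le_prod
  intro x hx
  obtain ⟨a, _, rfl⟩ := Multiset.mem_map.mp hx
  exact le_max_left _ _

lemma Mah_nonneg (p : ℂ[X]) : 0 ≤ Mah p := le_trans zero_le_one (one_le_Mah p)

lemma card_roots_monic (p : ℂ[X]) (hp : p.Monic) : Multiset.card p.roots = p.natDegree := by
  conv_rhs => rw [(IsAlgClosed.splits p).eq_prod_roots_of_monic hp]
  rw [Polynomial.natDegree_multiset_prod]
  · rw [Multiset.map_map]
    simp [Function.comp_def, natDegree_X_sub_C]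
  · intro h
    obtain ⟨a, _, ha⟩ := Multiset.mem_map.mp h
    exact X_sub_C_ne_zero a ha

/-- Landau's inequality. -/
lemma landau (p : ℂ[X]) (hp : p.Monic) (N : ℕ) (hN : p.natDegree + 1 ≤ N) :
    Mah p ^ 2 ≤ n2 p N := by
  have hsp : p = (p.roots.map fun a => X - C a).prod :=
    (IsAlgClosed.splits p).eq_prod_roots_of_monic hp
  set d := Multiset.card p.roots with hdd
  have hd : d = p.natDegree := card_roots_monic p hp
  set F : ℂ[X] := (p.roots.map swFac).prod with hF
  have h2 : n2 p N = n2 F N := by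
    have := n2_swap_all p.roots 1 N one_ne_zero (by simp; omega)
    rw [one_mul, one_mul, ← hsp] at this
    exact this
  have hFne : (0 : ℂ[X]) ∉ p.roots.map swFac := by
    intro h
    obtain ⟨a, _, ha⟩ := Multiset.mem_map.mp h
    exact swFac_ne_zero a ha
  have hFdeg : F.natDegree = d := by
    rw [hF, Polynomial.natDegree_multiset_prod _ hFne, Multiset.map_map]
    simp [Function.comp_def, swFac_natDegree]
    rfl
  have habs : Complex.abs F.leadingCoeff = Mah p := by
    rw [hF, Polynomial.leadingCoeff_multiset_prod, Multiset.map_map,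
      map_multiset_prod Complex.abs, Multiset.map_map]
    unfold Mah
    congr 1
    apply Multiset.map_congr rfl
    intro a _
    exact swFac_abs_leadingCoeff a
  have hcoeff : F.coeff d = F.leadingCoeff := by rw [← hFdeg]; rfl
  have hm : Mah p ^ 2 = Complex.normSq (F.coeff d) := by
    rw [hcoeff, ← habs, Complex.sq_abs]
  rw [h2, hm]
  unfold n2
  apply Finset.single_le_sum (f := fun k => Complex.normSq (F.coeff k))
  · intro k _; exact Complex.normSq_nonneg _
  · exact Finset.mem_range.mpr (by omega)

lemma prod_abs_le_prod_max (T : Multiset ℂ) :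
    (T.map Complex.abs).prod ≤ (T.map (fun a => max 1 (Complex.abs a))).prod := by
  induction T using Multiset.induction_on with
  | empty => simp
  | cons a t IH =>
    rw [Multiset.map_cons, Multiset.prod_cons, Multiset.map_cons, Multiset.prod_cons]
    apply mul_le_mul (le_max_right _ _) IH
    · apply Multiset.prod_nonneg
      intro x hx
      obtain ⟨b, _, rfl⟩ := Multiset.mem_map.mp hx
      exact AbsoluteValue.nonneg _ _
    · exact le_trans zero_le_one (le_max_left _ _)

lemma prod_max_mono {T s : Multiset ℂ} (h : T ≤ s) :
    (T.map (fun a => max 1 (Complex.abs a))).prod ≤ (s.map (fun a => max 1 (Complex.abs a))).prod := by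
  obtain ⟨u, rfl⟩ := Multiset.le_iff_exists_add.mp h
  rw [Multiset.map_add, Multiset.prod_add]
  nth_rewrite 1 [← mul_one ((T.map fun a => max 1 (Complex.abs a)).prod)]
  apply mul_le_mul_of_nonneg_left
  · apply Multiset.one_le_prod
    intro x hx
    obtain ⟨b, _, rfl⟩ := Multiset.mem_map.mp hx
    exact le_max_left _ _
  · apply Multiset.prod_nonneg
    intro x hx
    obtain ⟨b, _, rfl⟩ := Multiset.mem_map.mp hx
    exact le_trans zero_le_one (le_max_left _ _)

/-- Coefficient bound in terms of Mahler measure. -/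
lemma abs_coeff_le_Mah (p : ℂ[X]) (hp : p.Monic) (k : ℕ) :
    Complex.abs (p.coeff k) ≤ 2 ^ p.natDegree * Mah p := by
  have hpos : (0:ℝ) < 2 ^ p.natDegree * Mah p :=
    mul_pos (by positivity) (lt_of_lt_of_le zero_lt_one (one_le_Mah p))
  by_cases hk : k ≤ p.natDegree
  swap
  · rw [Polynomial.coeff_eq_zero_of_natDegree_lt (p := p) (by omega)]
    simp [hpos.le]
  have hd : Multiset.card p.roots = p.natDegree := card_roots_monic p hp
  have hsp : p = (p.roots.map fun a => X - C a).prod :=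
    (IsAlgClosed.splits p).eq_prod_roots_of_monic hp
  rw [show p.coeff k = ((p.roots.map fun a => X - C a).prod).coeff k from by rw [← hsp]]
  rw [Multiset.prod_X_sub_C_coeff _ (by rw [hd]; exact hk)]
  rw [map_mul, map_pow, map_neg_eq_map, map_one, one_pow, one_mul]
  -- bound esymm
  unfold Multiset.esymm
  calc Complex.abs ((Multiset.map Multiset.prod (p.roots.powersetCard (Multiset.card p.roots - k))).sum)
      ≤ ((Multiset.map Multiset.prod (p.roots.powersetCard (Multiset.card p.roots - k))).map
          (fun z : ℂ => Complex.abs z)).sum := by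
        simpa [Complex.norm_eq_abs] using
          norm_multiset_sum_le (Multiset.map Multiset.prod
            (p.roots.powersetCard (Multiset.card p.roots - k)))
    _ ≤ (Multiset.card ((Multiset.map Multiset.prod
          (p.roots.powersetCard (Multiset.card p.roots - k))).map (fun z : ℂ => Complex.abs z))) • Mah p := by
        apply Multiset.sum_le_card_nsmul
        intro x hx
        obtain ⟨z, hz, rfl⟩ := Multiset.mem_map.mp hx
        obtain ⟨T, hT, rfl⟩ := Multiset.mem_map.mp hz
        have hTle : T ≤ p.roots := (Multiset.mem_powersetCard.mp hT).1
        rw [map_multiset_prod Complex.abs]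
        exact le_trans (prod_abs_le_prod_max T) (prod_max_mono hTle)
    _ ≤ 2 ^ p.natDegree * Mah p := by
        rw [Multiset.card_map, Multiset.card_map, Multiset.card_powersetCard]
        rw [nsmul_eq_mul]
        apply mul_le_mul_of_nonneg_right _ (Mah_nonneg p)
        rw [hd]
        have hch : (p.natDegree).choose (p.natDegree - k) ≤ 2 ^ p.natDegree := by
          calc (p.natDegree).choose (p.natDegree - k)
              ≤ ∑ m ∈ Finset.range (p.natDegree + 1), (p.natDegree).choose m :=
                Finset.single_le_sum (fun m _ => Nat.zero_le _)
                  (Finset.mem_range.mpr (by omega))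
            _ = 2 ^ p.natDegree := Nat.sum_range_choose p.natDegree
        exact_mod_cast Nat.cast_le.mpr hch

section PtSec
variable {n : ℕ}

/-- The monic integer polynomial attached to `t`. -/
noncomputable def Pt (n : ℕ) (t : Fin n → ℤ) : ℤ[X] :=
  X ^ n + ∑ j : Fin n, C (t j) * X ^ (n - 1 - (j : ℕ))

lemma Pt_coeff_lt (hn : 1 ≤ n) (t : Fin n → ℤ) (j : Fin n) :
    (Pt n t).coeff (n - 1 - (j : ℕ)) = t j := by
  unfold Pt
  rw [Polynomial.coeff_add, Polynomial.coeff_X_pow, if_neg (by omega), zero_add,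
    Polynomial.finset_sum_coeff]
  rw [Finset.sum_eq_single j]
  · simp [Polynomial.coeff_C_mul, Polynomial.coeff_X_pow]
  · intro b _ hb
    rw [Polynomial.coeff_C_mul, Polynomial.coeff_X_pow, if_neg, mul_zero]
    have hb' : (b : ℕ) ≠ (j : ℕ) := fun h => hb (Fin.ext h)
    have : (b : ℕ) < n := b.isLt
    have : (j : ℕ) < n := j.isLt
    omega
  · intro h; exact absurd (Finset.mem_univ j) h

lemma Pt_coeff_n (hn : 1 ≤ n) (t : Fin n → ℤ) : (Pt n t).coeff n = 1 := by
  unfold Pt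
  rw [Polynomial.coeff_add, Polynomial.coeff_X_pow, if_pos rfl,
    Polynomial.finset_sum_coeff]
  rw [Finset.sum_eq_zero, add_zero]
  intro j _
  rw [Polynomial.coeff_C_mul, Polynomial.coeff_X_pow, if_neg (by have := j.isLt; omega), mul_zero]

lemma Pt_deg_sum_lt (hn : 1 ≤ n) (t : Fin n → ℤ) :
    (∑ j : Fin n, C (t j) * X ^ (n - 1 - (j : ℕ))).degree < ((n : ℕ) : WithBot ℕ) := by
  apply lt_of_le_of_lt (Polynomial.degree_sum_le _ _)
  rw [Finset.sup_lt_iff (by exact_mod_cast WithBot.bot_lt_coe n)]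
  intro j _
  apply lt_of_le_of_lt (degree_C_mul_X_pow_le _ _)
  have hj : (j : ℕ) < n := j.isLt
  exact_mod_cast (show n - 1 - (j:ℕ) < n by omega)

lemma Pt_monic (hn : 1 ≤ n) (t : Fin n → ℤ) : (Pt n t).Monic :=
  Polynomial.monic_X_pow_add (Pt_deg_sum_lt hn t)

lemma Pt_natDegree (hn : 1 ≤ n) (t : Fin n → ℤ) : (Pt n t).natDegree = n := by
  have hdeg : (Pt n t).degree = (n : ℕ) := by
    unfold Pt
    rw [Polynomial.degree_add_eq_left_of_degree_lt, Polynomial.degree_X_pow]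
    rw [Polynomial.degree_X_pow]
    exact Pt_deg_sum_lt hn t
  exact natDegree_eq_of_degree_eq_some hdeg

lemma Pt_injective (hn : 1 ≤ n) : Function.Injective (Pt n) := by
  intro t t' h
  funext j
  rw [← Pt_coeff_lt hn t j, ← Pt_coeff_lt hn t' j, h]

lemma Pt_map_eq (t : Fin n → ℤ) :
    (Pt n t).map (Int.castRingHom ℚ) =
      (X : ℚ[X]) ^ n + ∑ j : Fin n, C ((t j : ℚ)) * X ^ (n - 1 - (j : ℕ)) := by
  unfold Pt
  rw [Polynomial.map_add, Polynomial.map_pow, Polynomial.map_X, Polynomial.map_sum]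
  congr 1
  refine Finset.sum_congr rfl fun j _ => ?_
  rw [Polynomial.map_mul, Polynomial.map_C, Polynomial.map_pow, Polynomial.map_X]
  norm_num

lemma gauss_factor (hn : 1 ≤ n) {i : ℕ} (hi1 : 1 ≤ i) (hi2 : i ≤ n) (t : Fin n → ℤ)
    (g : ℚ[X]) (hgdeg : g.degree = (i : ℕ))
    (hgdvd : g ∣ (Pt n t).map (algebraMap ℤ ℚ)) :
    ∃ G H : ℤ[X], G.Monic ∧ H.Monic ∧ G.natDegree = i ∧ H.natDegree = n - i ∧
      G * H = Pt n t := by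
  have hmonic := Pt_monic hn t
  have hg0 : g ≠ 0 := fun h => by simp [h] at hgdeg
  have hlc : g.leadingCoeff ≠ 0 := Polynomial.leadingCoeff_ne_zero.mpr hg0
  obtain ⟨G, hG⟩ := IsIntegrallyClosed.eq_map_mul_C_of_dvd ℚ hmonic hgdvd
  have hGmap : G.map (algebraMap ℤ ℚ) = g * C (g.leadingCoeff)⁻¹ := by
    have h1 := congrArg (fun p => p * C (g.leadingCoeff)⁻¹) hG
    rw [← h1, mul_assoc, ← C_mul, mul_inv_cancel₀ hlc, C_1, mul_one]
  have hg1monic : (g * C (g.leadingCoeff)⁻¹).Monic := monic_mul_leadingCoeff_inv hg0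
  have hg1deg : (g * C (g.leadingCoeff)⁻¹).natDegree = i := by
    rw [natDegree_mul hg0 (by simp [hlc]), natDegree_C, add_zero]
    exact natDegree_eq_of_degree_eq_some hgdeg
  have hinj : Function.Injective (algebraMap ℤ ℚ) := fun a b h => by exact_mod_cast h
  have hGmonic : G.Monic := by
    have h2 := Polynomial.leadingCoeff_map_of_injective hinj G
    rw [hGmap, hg1monic.leadingCoeff] at h2
    rw [eq_intCast (algebraMap ℤ ℚ)] at h2
    have : G.leadingCoeff = 1 := by exact_mod_cast h2.symm
    exact this
  have hGdeg : G.natDegree = i := by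
    have h3 := Polynomial.natDegree_map_eq_of_injective hinj G
    rw [hGmap, hg1deg] at h3
    exact h3.symm
  have hdvd2 : G.map (algebraMap ℤ ℚ) ∣ (Pt n t).map (algebraMap ℤ ℚ) := by
    rw [hGmap]
    refine dvd_trans ⟨C g.leadingCoeff, ?_⟩ hgdvd
    rw [mul_assoc, ← C_mul, inv_mul_cancel₀ hlc, C_1, mul_one]
  obtain ⟨h, hh⟩ := hdvd2
  have hPmap : ((Pt n t).map (algebraMap ℤ ℚ)).Monic := hmonic.map _
  have hhmonic : h.Monic := (hGmonic.map (algebraMap ℤ ℚ)).of_mul_monic_left (hh ▸ hPmap)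
  have hhdvd : h ∣ (Pt n t).map (algebraMap ℤ ℚ) := ⟨G.map (algebraMap ℤ ℚ), by rw [hh]; ring⟩
  obtain ⟨H, hH⟩ := IsIntegrallyClosed.eq_map_mul_C_of_dvd ℚ hmonic hhdvd
  rw [hhmonic.leadingCoeff, C_1, mul_one] at hH
  have hHmonic : H.Monic := by
    have h2 := Polynomial.leadingCoeff_map_of_injective hinj H
    rw [hH, hhmonic.leadingCoeff] at h2
    rw [eq_intCast (algebraMap ℤ ℚ)] at h2
    have : H.leadingCoeff = 1 := by exact_mod_cast h2.symm
    exact this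
  have hprod : G * H = Pt n t := by
    apply Polynomial.map_injective (algebraMap ℤ ℚ) hinj
    rw [Polynomial.map_mul, hH, ← hh]
  have hHdeg : H.natDegree = n - i := by
    have h4 : (G * H).natDegree = n := by rw [hprod, Pt_natDegree hn]
    rw [natDegree_mul hGmonic.ne_zero hHmonic.ne_zero, hGdeg] at h4
    omega
  exact ⟨G, H, hGmonic, hHmonic, hGdeg, hHdeg, hprod⟩


end PtSec

/-- complexification -/
noncomputable def cx (p : ℤ[X]) : ℂ[X] := p.map (Int.castRingHom ℂ)

lemma cx_injective : Function.Injective cx :=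
  Polynomial.map_injective _ (fun a b h => by simpa using h)

lemma cx_monic {p : ℤ[X]} (hp : p.Monic) : (cx p).Monic := hp.map _

lemma cx_natDegree (p : ℤ[X]) : (cx p).natDegree = p.natDegree :=
  Polynomial.natDegree_map_eq_of_injective (fun a b h => by simpa using h) p

lemma cx_mul (p q : ℤ[X]) : cx (p * q) = cx p * cx q := Polynomial.map_mul _

lemma Mah_mul {p q : ℂ[X]} (hp : p ≠ 0) (hq : q ≠ 0) : Mah (p * q) = Mah p * Mah q := by
  unfold Mah
  rw [Polynomial.roots_mul (mul_ne_zero hp hq), Multiset.map_add, Multiset.prod_add]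

/-- integer coefficient bound via Mahler measure -/
lemma int_coeff_le {p : ℤ[X]} (hp : p.Monic) (k : ℕ) :
    |((p.coeff k : ℤ) : ℝ)| ≤ 2 ^ p.natDegree * Mah (cx p) := by
  have h := abs_coeff_le_Mah (cx p) (cx_monic hp) k
  rw [cx_natDegree] at h
  unfold cx at h ⊢
  rw [Polynomial.coeff_map] at h
  simpa [Complex.abs_intCast] using h

/-- Mahler measure of `Pt` is at most `(n+1) * B`. -/
lemma Mah_Pt_le {n : ℕ} (hn : 1 ≤ n) (t : Fin n → ℤ) (B : ℝ) (hB : 1 ≤ B)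
    (ht : ∀ j, (|t j| : ℝ) ≤ B) : Mah (cx (Pt n t)) ≤ (n + 1) * B := by
  have hmono := Pt_monic hn t
  have hdeg : (cx (Pt n t)).natDegree = n := by rw [cx_natDegree, Pt_natDegree hn]
  have hl := landau (cx (Pt n t)) (cx_monic hmono) (n + 1) (by rw [hdeg])
  have hn2 : n2 (cx (Pt n t)) (n + 1) ≤ (n + 1) * B ^ 2 := by
    unfold n2
    have hterm : ∀ k ∈ Finset.range (n + 1), Complex.normSq ((cx (Pt n t)).coeff k) ≤ B ^ 2 := by
      intro k hk
      rw [Finset.mem_range] at hk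
      unfold cx
      rw [Polynomial.coeff_map]
      rcases Nat.lt_or_ge k n with hkn | hkn
      · set j : Fin n := ⟨n - 1 - k, by omega⟩ with hj
        have : n - 1 - (j : ℕ) = k := by simp only [hj]; omega
        have hco : (Pt n t).coeff k = t j := by rw [← this, Pt_coeff_lt hn]
        rw [hco]
        have habs : Complex.abs ((t j : ℤ) : ℂ) ≤ B := by
          rw [Complex.abs_intCast]; exact_mod_cast ht j
        calc Complex.normSq ((t j : ℤ) : ℂ) = Complex.abs ((t j : ℤ) : ℂ) ^ 2 :=
              (Complex.sq_abs _).symm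
          _ ≤ B ^ 2 := by nlinarith [AbsoluteValue.nonneg Complex.abs ((t j : ℤ) : ℂ)]
      · have hkn' : k = n := by omega
        rw [hkn', Pt_coeff_n hn]
        rw [show ((Int.castRingHom ℂ) 1 : ℂ) = 1 by norm_num, map_one]
        nlinarith
    calc ∑ k ∈ Finset.range (n + 1), Complex.normSq ((cx (Pt n t)).coeff k)
        ≤ ∑ _k ∈ Finset.range (n + 1), B ^ 2 := Finset.sum_le_sum hterm
      _ = (n + 1) * B ^ 2 := by rw [Finset.sum_const, Finset.card_range]; ring
  have hM0 : 0 ≤ Mah (cx (Pt n t)) := Mah_nonneg _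
  have h1 : (0:ℝ) ≤ (n + 1) * B := by positivity
  nlinarith [hl, hn2, hM0, hB, sq_nonneg B,
    mul_nonneg (mul_nonneg (Nat.cast_nonneg n : (0:ℝ) ≤ n) (le_trans zero_le_one hB)) (le_trans zero_le_one hB)]

lemma monic_ext {p q : ℤ[X]} (hp : p.Monic) (hq : q.Monic)
    (hdeg : p.natDegree = q.natDegree)
    (h : ∀ k, k < p.natDegree → p.coeff k = q.coeff k) : p = q := by
  ext k
  rcases lt_trichotomy k p.natDegree with hk | hk | hk
  · exact h k hk
  · rw [hk, hp.coeff_natDegree, hdeg, hq.coeff_natDegree]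
  · rw [Polynomial.coeff_eq_zero_of_natDegree_lt hk,
      Polynomial.coeff_eq_zero_of_natDegree_lt (hdeg ▸ hk)]

lemma log_floor_bound (n : ℕ) (B : ℝ) (hB : 2 ≤ B) :
    (Nat.log 2 ⌊((n:ℝ)+1) * B⌋₊ + 1 : ℝ)
      ≤ (Real.log ((n:ℝ)+1) / (Real.log 2)^2 + 4) * Real.log B := by
  set Q := ((n:ℝ)+1) * B with hQ
  have hn1 : (1:ℝ) ≤ (n:ℝ)+1 := by
    have : (0:ℝ) ≤ (n:ℝ) := Nat.cast_nonneg n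
    linarith
  have hQ1 : (1:ℝ) ≤ Q := by nlinarith
  have hl2 : (0.6931471803 : ℝ) < Real.log 2 := Real.log_two_gt_d9
  have hl2' : Real.log 2 < 0.6931471808 := Real.log_two_lt_d9
  have hlogB : Real.log 2 ≤ Real.log B := Real.log_le_log (by norm_num) hB
  have hlogn : 0 ≤ Real.log ((n:ℝ)+1) := Real.log_nonneg hn1
  have hfQ : (1:ℕ) ≤ ⌊Q⌋₊ := Nat.le_floor (by exact_mod_cast hQ1)
  have h1 : (Nat.log 2 ⌊Q⌋₊ : ℝ) ≤ Real.logb 2 ⌊Q⌋₊ := Real.natLog_le_logb _ _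
  have h2 : Real.logb 2 (⌊Q⌋₊ : ℝ) ≤ Real.logb 2 Q := by
    exact Real.logb_le_logb_of_le (by norm_num)
      (by exact_mod_cast Nat.lt_of_lt_of_le Nat.zero_lt_one hfQ)
      (Nat.floor_le (by linarith))
  have hlogQ : Real.log Q = Real.log ((n:ℝ)+1) + Real.log B := by
    rw [hQ, Real.log_mul (by linarith) (by linarith)]
  have hkey : (Nat.log 2 ⌊Q⌋₊ : ℝ) ≤ (Real.log ((n:ℝ)+1) + Real.log B) / Real.log 2 := by
    calc (Nat.log 2 ⌊Q⌋₊ : ℝ) ≤ Real.logb 2 ⌊Q⌋₊ := h1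
      _ ≤ Real.logb 2 Q := h2
      _ = Real.log Q / Real.log 2 := rfl
      _ = (Real.log ((n:ℝ)+1) + Real.log B) / Real.log 2 := by rw [hlogQ]
  have hl2pos : 0 < Real.log 2 := by linarith
  have hBpos : 0 < Real.log B := by linarith
  -- final: x/l + y/l + 1 ≤ (x/l² + 4)·y  given y ≥ l, x ≥ 0, 1/2 ≤ l ≤ 1
  set x := Real.log ((n:ℝ)+1)
  set y := Real.log B
  set l := Real.log 2
  have hl2pos0 : 0 < Real.log 2 := by linarith
  have e1 : x / l ≤ x / l^2 * y := by
    have hc : x / l = x / l^2 * l := by field_simp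
    rw [hc]
    apply mul_le_mul_of_nonneg_left hlogB (by positivity)
  have e2 : y / l ≤ 2 * y := by
    rw [div_le_iff₀ hl2pos]
    nlinarith
  have e3 : (1:ℝ) ≤ 2 * y := by nlinarith
  have := hkey
  rw [add_div] at this
  nlinarith [this, e1, e2, e3]

lemma per_m_bound (n i m : ℕ) (hin' : i ≤ n) (Q : ℝ) (hQ1 : 1 ≤ Q) (h2m : (2:ℝ)^m ≤ Q) :
    (((2*((2:ℤ)^(n+m+1))+1).toNat : ℝ))^i * (((2*⌈(2:ℝ)^n * Q / 2^m⌉+1).toNat : ℝ))^(n-i)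
      ≤ (2:ℝ)^((n+3)*n) * Q^(n-i) * (((2:ℝ)^m)^i / ((2:ℝ)^m)^(n-i)) := by
  have h2mpos : (0:ℝ) < 2^m := pow_pos two_pos m
  set x : ℝ := (2:ℝ)^n * Q / 2^m with hxdef
  have h2n1 : (1:ℝ) ≤ 2^n := one_le_pow₀ (by norm_num)
  have hx1 : (1:ℝ) ≤ x := by
    rw [hxdef, le_div_iff₀ h2mpos, one_mul]
    nlinarith
  -- first factor
  have hf1 : (((2*((2:ℤ)^(n+m+1))+1).toNat : ℝ)) = 2*(2:ℝ)^(n+m+1)+1 := by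
    have h0 : (((2*((2:ℤ)^(n+m+1))+1).toNat : ℤ)) = 2*((2:ℤ)^(n+m+1))+1 :=
      Int.toNat_of_nonneg (by positivity)
    rw [← Int.cast_natCast (R := ℝ), h0]
    push_cast; ring
  have hf1b : 2*(2:ℝ)^(n+m+1)+1 ≤ (2:ℝ)^(n+m+3) := by
    have e : (2:ℝ)^(n+m+3) = 2*(2:ℝ)^(n+m+1) + 2*(2:ℝ)^(n+m+1) := by
      rw [show n+m+3 = (n+m+1)+2 from by omega, pow_add]; ring
    have : (1:ℝ) ≤ 2*(2:ℝ)^(n+m+1) := by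
      have : (1:ℝ) ≤ (2:ℝ)^(n+m+1) := one_le_pow₀ (by norm_num)
      linarith
    linarith
  -- second factor
  have hceil : (0:ℤ) ≤ 2*⌈x⌉+1 := by
    have : (1:ℝ) ≤ (⌈x⌉ : ℝ) := le_trans hx1 (Int.le_ceil x)
    have : (1:ℤ) ≤ ⌈x⌉ := by exact_mod_cast this
    omega
  have hf2 : (((2*⌈x⌉+1).toNat : ℝ)) = 2*((⌈x⌉:ℤ):ℝ)+1 := by
    have h0 : (((2*⌈x⌉+1).toNat : ℤ)) = 2*⌈x⌉+1 := Int.toNat_of_nonneg hceil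
    rw [← Int.cast_natCast (R := ℝ), h0]
    push_cast; ring
  have hf2b : 2*((⌈x⌉:ℤ):ℝ)+1 ≤ (2:ℝ)^3 * x := by
    have h1 : ((⌈x⌉:ℤ):ℝ) < x + 1 := Int.ceil_lt_add_one x
    nlinarith
  -- combine with pow monotonicity
  have hmain : (((2*((2:ℤ)^(n+m+1))+1).toNat : ℝ))^i * (((2*⌈x⌉+1).toNat : ℝ))^(n-i)
      ≤ ((2:ℝ)^(n+m+3))^i * ((2:ℝ)^3 * x)^(n-i) := by
    apply mul_le_mul
    · apply pow_le_pow_left₀ (by rw [hf1]; positivity) (by rw [hf1]; exact hf1b)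
    · apply pow_le_pow_left₀ (by rw [hf2]; positivity) (by rw [hf2]; exact hf2b)
    · positivity
    · positivity
  refine le_trans hmain ?_
  -- now an exact identity/inequality
  have e0 : (2:ℝ)^(n+m+3) = 2^(n+3) * 2^m := by
    rw [show n+m+3 = (n+3)+m from by omega, pow_add]
  have e1 : ((2:ℝ)^(n+3))^i * ((2:ℝ)^(n+3))^(n-i) = (2:ℝ)^((n+3)*n) := by
    rw [← pow_add, show i+(n-i) = n from by omega, ← pow_mul]
  have heq : ((2:ℝ)^(n+m+3))^i * ((2:ℝ)^3 * x)^(n-i)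
      = ((2:ℝ)^(n+3))^i * ((2:ℝ)^m)^i * (((2:ℝ)^3 * (2:ℝ)^n)^(n-i) * Q^(n-i) / ((2:ℝ)^m)^(n-i)) := by
    rw [e0, hxdef]
    ring
  rw [heq]
  have e2 : ((2:ℝ)^3 * (2:ℝ)^n)^(n-i) = ((2:ℝ)^(n+3))^(n-i) := by
    rw [← pow_add, Nat.add_comm 3 n]
  rw [e2]
  -- LHS = (2^(n+3))^i (2^m)^i * ((2^(n+3))^(n-i) Q^(n-i)/(2^m)^(n-i))
  -- RHS = 2^((n+3)*n) * Q^(n-i) * ((2^m)^i/(2^m)^(n-i))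
  rw [← e1]
  apply le_of_eq
  field_simp

theorem stmt_4 (n i : ℕ) (hn : 2 ≤ n) (hi : 1 ≤ i) (hin : 2 * i ≤ n) :
    ∃ c : ℝ, 0 < c ∧ ∀ B : ℝ, 2 ≤ B →
      (2 * i < n →
        (Set.ncard {t : Fin n → ℤ |
            (∀ j, (|t j| : ℝ) ≤ B) ∧
            ∃ g : Polynomial ℚ, g.degree = (i : ℕ) ∧
              g ∣ ((X : ℚ[X]) ^ n + ∑ j : Fin n, C ((t j : ℚ)) * X ^ (n - 1 - (j : ℕ)))} : ℝ) ≤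
          c * B ^ ((n : ℝ) - (i : ℝ))) ∧
      (2 * i = n →
        (Set.ncard {t : Fin n → ℤ |
            (∀ j, (|t j| : ℝ) ≤ B) ∧
            ∃ g : Polynomial ℚ, g.degree = (i : ℕ) ∧
              g ∣ ((X : ℚ[X]) ^ n + ∑ j : Fin n, C ((t j : ℚ)) * X ^ (n - 1 - (j : ℕ)))} : ℝ) ≤
          c * B ^ ((n : ℝ) - (i : ℝ)) * Real.log B) := by
  classical
  have hin' : i ≤ n := by omega
  have hn1 : 1 ≤ n := by omega
  set CL : ℝ := Real.log ((n:ℝ)+1) / (Real.log 2)^2 + 4 with hCLdef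
  have hlogn : 0 ≤ Real.log ((n:ℝ)+1) := Real.log_nonneg (by
    have : (0:ℝ) ≤ (n:ℝ) := Nat.cast_nonneg n
    linarith)
  have hl2pos : (0:ℝ) < Real.log 2 := Real.log_pos (by norm_num)
  have hCL : 0 < CL := by
    have : 0 ≤ Real.log ((n:ℝ)+1) / (Real.log 2)^2 := by positivity
    rw [hCLdef]; linarith
  refine ⟨(2:ℝ)^((n+3)*n) * ((n:ℝ)+1)^n * (CL + 2), by positivity, ?_⟩
  intro B hB
  set T := {t : Fin n → ℤ |
      (∀ j, (|t j| : ℝ) ≤ B) ∧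
      ∃ g : Polynomial ℚ, g.degree = (i : ℕ) ∧
        g ∣ ((X : ℚ[X]) ^ n + ∑ j : Fin n, C ((t j : ℚ)) * X ^ (n - 1 - (j : ℕ)))} with hTdef
  have hB1 : (1:ℝ) ≤ B := by linarith
  have hBpos : (0:ℝ) < B := by linarith
  set Q : ℝ := ((n:ℝ)+1) * B with hQdef
  have hn1R : (1:ℝ) ≤ (n:ℝ)+1 := by
    have : (0:ℝ) ≤ (n:ℝ) := Nat.cast_nonneg n
    linarith
  have hQ1 : (1:ℝ) ≤ Q := by nlinarith
  have hQpos : (0:ℝ) < Q := by linarith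
  set M0 : ℕ := Nat.log 2 ⌊Q⌋₊ with hM0def
  have hfQ1 : 1 ≤ ⌊Q⌋₊ := Nat.le_floor (by exact_mod_cast hQ1)
  have h2M0 : ((2:ℝ))^M0 ≤ Q := by
    have h := Nat.pow_log_le_self 2 (by omega : ⌊Q⌋₊ ≠ 0)
    calc ((2:ℝ))^M0 = ((2^M0 : ℕ) : ℝ) := by push_cast; ring
      _ ≤ (⌊Q⌋₊ : ℝ) := by exact_mod_cast h
      _ ≤ Q := Nat.floor_le (by linarith)
  -- choose factorizations
  have hex : ∀ t, t ∈ T → ∃ GH : ℤ[X] × ℤ[X], GH.1.Monic ∧ GH.2.Monic ∧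
      GH.1.natDegree = i ∧ GH.2.natDegree = n - i ∧ GH.1 * GH.2 = Pt n t := by
    intro t ht
    obtain ⟨hbox, g, hgdeg, hgdvd⟩ := ht
    have hdvd : g ∣ (Pt n t).map (algebraMap ℤ ℚ) := by
      have he : algebraMap ℤ ℚ = Int.castRingHom ℚ := rfl
      rw [he, Pt_map_eq]; exact hgdvd
    obtain ⟨G, H, h1, h2, h3, h4, h5⟩ := gauss_factor hn1 hi hin' t g hgdeg hdvd
    exact ⟨(G, H), h1, h2, h3, h4, h5⟩
  set Fp : (Fin n → ℤ) → ℤ[X] × ℤ[X] :=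
    fun t => if h : t ∈ T then (hex t h).choose else (1, 1) with hFpdef
  have hFp : ∀ t, ∀ h : t ∈ T, (Fp t).1.Monic ∧ (Fp t).2.Monic ∧
      (Fp t).1.natDegree = i ∧ (Fp t).2.natDegree = n - i ∧ (Fp t).1 * (Fp t).2 = Pt n t := by
    intro t h
    simp only [hFpdef, dif_pos h]
    exact (hex t h).choose_spec
  set mdy : (Fin n → ℤ) → ℕ := fun t => Nat.log 2 ⌊Mah (cx (Fp t).1)⌋₊ with hmdydef
  set Φ : (Fin n → ℤ) → ℕ × (Fin i → ℤ) × (Fin (n-i) → ℤ) :=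
    fun t => (mdy t, fun k => (Fp t).1.coeff k, fun k => (Fp t).2.coeff k) with hPhidef
  set NG : ℕ → ℤ := fun m => 2^(n + m + 1) with hNGdef
  set KH : ℕ → ℤ := fun m => ⌈(2:ℝ)^n * Q / 2^m⌉ with hKHdef
  set U : Finset (ℕ × (Fin i → ℤ) × (Fin (n-i) → ℤ)) :=
    (Finset.range (M0+1)).biUnion (fun m =>
      {m} ×ˢ (Fintype.piFinset fun _ : Fin i => Finset.Icc (-(NG m)) (NG m))
          ×ˢ (Fintype.piFinset fun _ : Fin (n-i) => Finset.Icc (-(KH m)) (KH m))) with hUdef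
  -- per-element facts
  have hfacts : ∀ t, ∀ h : t ∈ T,
      mdy t ≤ M0 ∧
      (∀ k : Fin i, (Fp t).1.coeff (k:ℕ) ∈ Finset.Icc (-(NG (mdy t))) (NG (mdy t))) ∧
      (∀ k : Fin (n-i), (Fp t).2.coeff (k:ℕ) ∈ Finset.Icc (-(KH (mdy t))) (KH (mdy t))) := by
    intro t h
    obtain ⟨hGm, hHm, hGd, hHd, hprod⟩ := hFp t h
    obtain ⟨hbox, -⟩ := h
    have ha1 : 1 ≤ Mah (cx (Fp t).1) := one_le_Mah _
    have hb1 : 1 ≤ Mah (cx (Fp t).2) := one_le_Mah _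
    have hapos : 0 < Mah (cx (Fp t).1) := by linarith
    have habQ : Mah (cx (Fp t).1) * Mah (cx (Fp t).2) ≤ Q := by
      have hcc : cx (Fp t).1 * cx (Fp t).2 = cx (Pt n t) := by rw [← cx_mul, hprod]
      have hM : Mah (cx (Fp t).1) * Mah (cx (Fp t).2) = Mah (cx (Pt n t)) := by
        rw [← Mah_mul (cx_monic hGm).ne_zero (cx_monic hHm).ne_zero, hcc]
      rw [hM, hQdef]
      exact Mah_Pt_le hn1 t B hB1 hbox
    have haQ : Mah (cx (Fp t).1) ≤ Q := by nlinarith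
    have hfa1 : 1 ≤ ⌊Mah (cx (Fp t).1)⌋₊ := Nat.le_floor (by exact_mod_cast ha1)
    have h2m : (2:ℝ)^(mdy t) ≤ Mah (cx (Fp t).1) := by
      have hh := Nat.pow_log_le_self 2 (by omega : ⌊Mah (cx (Fp t).1)⌋₊ ≠ 0)
      calc (2:ℝ)^(mdy t) = ((2^(mdy t) : ℕ) : ℝ) := by push_cast; ring
        _ ≤ (⌊Mah (cx (Fp t).1)⌋₊ : ℝ) := by rw [hmdydef]; exact_mod_cast hh
        _ ≤ Mah (cx (Fp t).1) := Nat.floor_le (by linarith)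
    have ham : Mah (cx (Fp t).1) ≤ (2:ℝ)^(mdy t + 1) := by
      have h1 : Mah (cx (Fp t).1) < (⌊Mah (cx (Fp t).1)⌋₊ : ℝ) + 1 := Nat.lt_floor_add_one _
      have h2 : ⌊Mah (cx (Fp t).1)⌋₊ < 2^(mdy t + 1) := Nat.lt_pow_succ_log_self (by norm_num) _
      have h3 : (⌊Mah (cx (Fp t).1)⌋₊ : ℝ) + 1 ≤ ((2^(mdy t + 1) : ℕ) : ℝ) := by exact_mod_cast h2
      have := lt_of_lt_of_le h1 h3
      calc Mah (cx (Fp t).1) ≤ ((2^(mdy t + 1) : ℕ) : ℝ) := this.le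
        _ = (2:ℝ)^(mdy t + 1) := by push_cast; ring
    refine ⟨?_, ?_, ?_⟩
    · rw [hmdydef, hM0def]
      exact Nat.log_mono_right (Nat.floor_le_floor haQ)
    · intro k
      rw [Finset.mem_Icc]
      have hc := int_coeff_le hGm (k : ℕ)
      rw [hGd] at hc
      have hreal : |((((Fp t).1.coeff (k:ℕ)) : ℤ) : ℝ)| ≤ ((NG (mdy t) : ℤ) : ℝ) := by
        rw [hNGdef]
        push_cast
        calc |((((Fp t).1.coeff (k:ℕ)) : ℤ):ℝ)| ≤ 2^i * Mah (cx (Fp t).1) := hc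
          _ ≤ 2^i * 2^(mdy t + 1) := by
              apply mul_le_mul_of_nonneg_left ham (by positivity)
          _ = 2^(i + (mdy t + 1)) := by rw [← pow_add]
          _ ≤ 2^(n + mdy t + 1) := by
              apply pow_le_pow_right₀ (by norm_num)
              omega
      have habs : |(Fp t).1.coeff (k:ℕ)| ≤ NG (mdy t) := by
        have := hreal
        rw [← Int.cast_abs] at this
        exact_mod_cast this
      exact abs_le.mp habs
    · intro k
      rw [Finset.mem_Icc]
      have hc := int_coeff_le hHm (k : ℕ)
      rw [hHd] at hc
      have hbQa : Mah (cx (Fp t).2) ≤ Q / Mah (cx (Fp t).1) := by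
        rw [le_div_iff₀ hapos]
        nlinarith
      have hQa : Q / Mah (cx (Fp t).1) ≤ Q / (2:ℝ)^(mdy t) := by
        apply div_le_div_of_nonneg_left (by linarith) (by positivity) h2m
      have hreal : |((((Fp t).2.coeff (k:ℕ)) : ℤ) : ℝ)| ≤ ((KH (mdy t) : ℤ) : ℝ) := by
        rw [hKHdef]
        calc |((((Fp t).2.coeff (k:ℕ)) : ℤ):ℝ)| ≤ 2^(n-i) * Mah (cx (Fp t).2) := hc
          _ ≤ 2^(n-i) * (Q / (2:ℝ)^(mdy t)) := by
              apply mul_le_mul_of_nonneg_left (le_trans hbQa hQa) (by positivity)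
          _ ≤ 2^n * (Q / (2:ℝ)^(mdy t)) := by
              apply mul_le_mul_of_nonneg_right _ (by positivity)
              apply pow_le_pow_right₀ (by norm_num)
              omega
          _ = 2^n * Q / (2:ℝ)^(mdy t) := by ring
          _ ≤ ((⌈(2:ℝ)^n * Q / 2^(mdy t)⌉ : ℤ) : ℝ) := Int.le_ceil _
      have habs : |(Fp t).2.coeff (k:ℕ)| ≤ KH (mdy t) := by
        have := hreal
        rw [← Int.cast_abs] at this
        exact_mod_cast this
      exact abs_le.mp habs
  -- injectivity
  have hinjOn : Set.InjOn Φ T := by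
    intro t ht t' ht' heq
    obtain ⟨hGm, hHm, hGd, hHd, hprod⟩ := hFp t ht
    obtain ⟨hGm', hHm', hGd', hHd', hprod'⟩ := hFp t' ht'
    have h2 := congrArg (fun p => p.2.1) heq
    have h3 := congrArg (fun p => p.2.2) heq
    simp only [hPhidef] at h2 h3
    have hG : (Fp t).1 = (Fp t').1 := by
      apply monic_ext hGm hGm' (by rw [hGd, hGd'])
      intro k hk
      rw [hGd] at hk
      exact congrFun h2 ⟨k, hk⟩
    have hH : (Fp t).2 = (Fp t').2 := by
      apply monic_ext hHm hHm' (by rw [hHd, hHd'])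
      intro k hk
      rw [hHd] at hk
      exact congrFun h3 ⟨k, hk⟩
    apply Pt_injective hn1
    rw [← hprod, ← hprod', hG, hH]
  -- membership
  have hmem : ∀ t ∈ T, Φ t ∈ (U : Set (ℕ × (Fin i → ℤ) × (Fin (n-i) → ℤ))) := by
    intro t ht
    obtain ⟨hm, hg, hh⟩ := hfacts t ht
    rw [Finset.mem_coe, hUdef, Finset.mem_biUnion]
    refine ⟨mdy t, Finset.mem_range.mpr (by omega), ?_⟩
    refine Finset.mem_product.mpr ⟨Finset.mem_singleton_self _, Finset.mem_product.mpr ⟨?_, ?_⟩⟩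
    · exact Fintype.mem_piFinset.mpr (fun k => hg k)
    · exact Fintype.mem_piFinset.mpr (fun k => hh k)
  -- the raw count
  have hcount : (T.ncard : ℝ) ≤ (U.card : ℝ) := by
    have := Set.ncard_le_ncard_of_injOn Φ hmem hinjOn (U.finite_toSet)
    rw [Set.ncard_coe_finset] at this
    exact_mod_cast this
  -- card of U
  have hUcard : (U.card : ℝ) ≤
      ∑ m ∈ Finset.range (M0+1),
        (((2*NG m+1).toNat : ℝ))^i * (((2*KH m+1).toNat : ℝ))^(n-i) := by
    have h1 : U.card ≤ ∑ m ∈ Finset.range (M0+1),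
        ({m} ×ˢ (Fintype.piFinset fun _ : Fin i => Finset.Icc (-(NG m)) (NG m))
            ×ˢ (Fintype.piFinset fun _ : Fin (n-i) => Finset.Icc (-(KH m)) (KH m))).card := by
      rw [hUdef]; exact Finset.card_biUnion_le
    have h2 : ∀ m, ({m} ×ˢ (Fintype.piFinset fun _ : Fin i => Finset.Icc (-(NG m)) (NG m))
            ×ˢ (Fintype.piFinset fun _ : Fin (n-i) => Finset.Icc (-(KH m)) (KH m))).card
          = ((2*NG m+1).toNat)^i * ((2*KH m+1).toNat)^(n-i) := by
      intro m
      rw [Finset.card_product, Finset.card_product, Finset.card_singleton, one_mul]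
      rw [Fintype.card_piFinset, Fintype.card_piFinset]
      simp only [Int.card_Icc]
      rw [Finset.prod_const, Finset.prod_const, Finset.card_univ, Finset.card_univ,
        Fintype.card_fin, Fintype.card_fin]
      congr 2 <;> · congr 1; omega
    calc (U.card : ℝ) ≤ ((∑ m ∈ Finset.range (M0+1),
        ({m} ×ˢ (Fintype.piFinset fun _ : Fin i => Finset.Icc (-(NG m)) (NG m))
            ×ˢ (Fintype.piFinset fun _ : Fin (n-i) => Finset.Icc (-(KH m)) (KH m))).card : ℕ) : ℝ) := by
          exact_mod_cast h1
      _ = ∑ m ∈ Finset.range (M0+1),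
            (((2*NG m+1).toNat : ℝ))^i * (((2*KH m+1).toNat : ℝ))^(n-i) := by
          push_cast
          refine Finset.sum_congr rfl fun m _ => ?_
          rw [h2 m]
          push_cast
          ring
  -- per-m bound
  have hsumbound : (T.ncard : ℝ) ≤
      (2:ℝ)^((n+3)*n) * Q^(n-i) *
        ∑ m ∈ Finset.range (M0+1), (((2:ℝ)^m)^i / ((2:ℝ)^m)^(n-i)) := by
    rw [Finset.mul_sum]
    refine le_trans hcount (le_trans hUcard (Finset.sum_le_sum fun m hm => ?_))
    have hmle : (2:ℝ)^m ≤ Q := by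
      rw [Finset.mem_range] at hm
      calc (2:ℝ)^m ≤ (2:ℝ)^M0 := by
            apply pow_le_pow_right₀ (by norm_num)
            omega
        _ ≤ Q := h2M0
    have := per_m_bound n i m hin' Q hQ1 hmle
    rw [hNGdef, hKHdef]
    exact le_trans this (le_of_eq (by ring))
  -- common quantities
  have hrw : B ^ ((n:ℝ)-(i:ℝ)) = B^((n-i : ℕ)) := by
    rw [← Nat.cast_sub hin', Real.rpow_natCast]
  have hQpow : Q^(n-i) ≤ ((n:ℝ)+1)^n * B^(n-i) := by
    rw [hQdef, mul_pow]
    apply mul_le_mul_of_nonneg_right _ (by positivity)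
    apply pow_le_pow_right₀ hn1R
    omega
  have hBpow : (0:ℝ) ≤ B^(n-i) := by positivity
  have hA : (0:ℝ) < (2:ℝ)^((n+3)*n) := by positivity
  have hfac : (0:ℝ) ≤ (2:ℝ)^((n+3)*n) * ((n:ℝ)+1)^n * B^(n-i) := by positivity
  have hQn0 : (0:ℝ) ≤ (2:ℝ)^((n+3)*n) * Q^(n-i) := by
    exact mul_nonneg hA.le (pow_nonneg hQpos.le _)
  constructor
  · -- case 2i < n
    intro hlt
    have hterm : ∀ m ∈ Finset.range (M0+1),
        ((2:ℝ)^m)^i / ((2:ℝ)^m)^(n-i) ≤ ((1:ℝ)/2)^m := by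
      intro m _
      have h1 : ((2:ℝ)^m)^(n-i) = ((2:ℝ)^m)^i * ((2:ℝ)^m)^(n-2*i) := by
        rw [← pow_add]
        congr 1
        omega
      have h2 : (2:ℝ)^m ≤ ((2:ℝ)^m)^(n-2*i) := by
        calc (2:ℝ)^m = ((2:ℝ)^m)^1 := (pow_one _).symm
          _ ≤ ((2:ℝ)^m)^(n-2*i) := by
              apply pow_le_pow_right₀ (one_le_pow₀ (by norm_num))
              omega
      have h3 : (0:ℝ) < ((2:ℝ)^m)^i := by positivity
      rw [h1, div_mul_eq_div_div, div_self h3.ne', one_div_pow]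
      exact one_div_le_one_div_of_le (by positivity) h2
    have hsum2 : ∑ m ∈ Finset.range (M0+1), ((1:ℝ)/2)^m ≤ 2 := by
      rw [geom_sum_eq (by norm_num : (1/2:ℝ) ≠ 1)]
      rw [div_le_iff_of_neg (by norm_num : (1/2:ℝ) - 1 < 0)]
      have : (0:ℝ) ≤ (1/2:ℝ)^(M0+1) := by positivity
      linarith
    calc (T.ncard:ℝ)
        ≤ (2:ℝ)^((n+3)*n) * Q^(n-i) *
            ∑ m ∈ Finset.range (M0+1), (((2:ℝ)^m)^i / ((2:ℝ)^m)^(n-i)) := hsumbound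
      _ ≤ (2:ℝ)^((n+3)*n) * Q^(n-i) * 2 := by
          exact mul_le_mul_of_nonneg_left (le_trans (Finset.sum_le_sum hterm) hsum2) hQn0
      _ ≤ (2:ℝ)^((n+3)*n) * (((n:ℝ)+1)^n * B^(n-i)) * 2 := by
          apply mul_le_mul_of_nonneg_right _ (by norm_num)
          exact mul_le_mul_of_nonneg_left hQpow hA.le
      _ ≤ (2:ℝ)^((n+3)*n) * ((n:ℝ)+1)^n * (CL + 2) * B ^ ((n:ℝ)-(i:ℝ)) := by
          rw [hrw]
          have e : (2:ℝ)^((n+3)*n) * (((n:ℝ)+1)^n * B^(n-i)) * 2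
              = ((2:ℝ)^((n+3)*n) * ((n:ℝ)+1)^n * B^(n-i)) * 2 := by ring
          have e2 : (2:ℝ)^((n+3)*n) * ((n:ℝ)+1)^n * (CL + 2) * B^(n-i)
              = ((2:ℝ)^((n+3)*n) * ((n:ℝ)+1)^n * B^(n-i)) * (CL+2) := by ring
          rw [e, e2]
          apply mul_le_mul_of_nonneg_left (by linarith) hfac
  · -- case 2i = n
    intro he
    have hni : n - i = i := by omega
    have hterm1 : ∀ m ∈ Finset.range (M0+1),
        ((2:ℝ)^m)^i / ((2:ℝ)^m)^(n-i) = 1 := by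
      intro m _
      rw [hni]
      exact div_self (by positivity)
    have hsumeq : ∑ m ∈ Finset.range (M0+1), (((2:ℝ)^m)^i / ((2:ℝ)^m)^(n-i))
        = ((M0:ℝ)+1) := by
      rw [Finset.sum_congr rfl hterm1, Finset.sum_const, Finset.card_range]
      simp
    have hlog : ((M0:ℝ)+1) ≤ CL * Real.log B := by
      have h := log_floor_bound n B hB
      rw [← hQdef] at h
      rw [← hCLdef] at h
      rw [← hM0def] at h
      exact h
    have hlogBpos : 0 < Real.log B := Real.log_pos (by linarith)
    calc (T.ncard:ℝ)
        ≤ (2:ℝ)^((n+3)*n) * Q^(n-i) *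
            ∑ m ∈ Finset.range (M0+1), (((2:ℝ)^m)^i / ((2:ℝ)^m)^(n-i)) := hsumbound
      _ = (2:ℝ)^((n+3)*n) * Q^(n-i) * ((M0:ℝ)+1) := by rw [hsumeq]
      _ ≤ (2:ℝ)^((n+3)*n) * Q^(n-i) * (CL * Real.log B) := by
          exact mul_le_mul_of_nonneg_left hlog hQn0
      _ ≤ (2:ℝ)^((n+3)*n) * (((n:ℝ)+1)^n * B^(n-i)) * (CL * Real.log B) := by
          exact mul_le_mul_of_nonneg_right (mul_le_mul_of_nonneg_left hQpow hA.le)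
            (mul_nonneg hCL.le hlogBpos.le)
      _ ≤ (2:ℝ)^((n+3)*n) * ((n:ℝ)+1)^n * (CL + 2) * B ^ ((n:ℝ)-(i:ℝ)) * Real.log B := by
          rw [hrw]
          have e : (2:ℝ)^((n+3)*n) * (((n:ℝ)+1)^n * B^(n-i)) * (CL * Real.log B)
              = ((2:ℝ)^((n+3)*n) * ((n:ℝ)+1)^n * B^(n-i)) * CL * Real.log B := by ring
          have e2 : (2:ℝ)^((n+3)*n) * ((n:ℝ)+1)^n * (CL + 2) * B^(n-i) * Real.log B
              = ((2:ℝ)^((n+3)*n) * ((n:ℝ)+1)^n * B^(n-i)) * (CL+2) * Real.log B := by ring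
          rw [e, e2]
          apply mul_le_mul_of_nonneg_right _ hlogBpos.le
          apply mul_le_mul_of_nonneg_left (by linarith) hfac
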